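/- Let v : (0,1) × (0,∞) → ℝ be twice continuously differentiable with ∂_{ss}v(t,s) > 0 for all (t,s), satisfying ∂_t v(t,s) = 1/(2 s² ∂_{ss}v(t,s)). Let J ⊆ ℝ be open and let g : (0,1) × J → ℝ be twice continuously differentiable such that for all (t,s) ∈ (0,1) × (0,∞): ∂_s v(t,s) ∈ J, g(t, ∂_s v(t,s)) = s·∂_s v(t,s) − v(t,s), and ∂_y g(t, ∂_s v(t,s)) = s (i.e. g(t,·) is the Legendre transform of v(t,·)). Then at every point of the form (t, y) with y = ∂_s v(t,s), the function g satisfies ∂_t g(t,y) + ∂_{yy}g(t,y) / (2 (∂_y g(t,y))²) = 0. -/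

import Mathlib

open Set

/-- Let `v` on `(0,1) × (0,∞)` be twice continuously differentiable with `∂ₛₛv > 0` and
`∂ₜv = 1/(2s²∂ₛₛv)`, and let `g` on `(0,1) × J` (with `J` open) be twice continuously
differentiable with `g(t,·)` the Legendre transform of `v(t,·)`, i.e.
`g(t, ∂ₛv(t,s)) = s·∂ₛv(t,s) − v(t,s)` and `∂_y g(t, ∂ₛv(t,s)) = s`. Then at every point
`(t,y)` with `y = ∂ₛv(t,s)`, `g` satisfies `∂ₜg + ∂_{yy}g/(2(∂_y g)²) = 0`. -/
theorem stmt12 (v vt vs vss : ℝ → ℝ → ℝ)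
    (hvt : ∀ t ∈ Set.Ioo (0:ℝ) 1, ∀ s ∈ Set.Ioi (0:ℝ),
      HasDerivAt (fun τ => v τ s) (vt t s) t)
    (hvs : ∀ t ∈ Set.Ioo (0:ℝ) 1, ∀ s ∈ Set.Ioi (0:ℝ),
      HasDerivAt (fun s' => v t s') (vs t s) s)
    (hvss : ∀ t ∈ Set.Ioo (0:ℝ) 1, ∀ s ∈ Set.Ioi (0:ℝ),
      HasDerivAt (fun s' => vs t s') (vss t s) s)
    (hvtc : ContinuousOn (fun p : ℝ × ℝ => vt p.1 p.2) (Set.Ioo (0:ℝ) 1 ×ˢ Set.Ioi (0:ℝ)))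
    (hvsc : ContinuousOn (fun p : ℝ × ℝ => vs p.1 p.2) (Set.Ioo (0:ℝ) 1 ×ˢ Set.Ioi (0:ℝ)))
    (hvssc : ContinuousOn (fun p : ℝ × ℝ => vss p.1 p.2) (Set.Ioo (0:ℝ) 1 ×ˢ Set.Ioi (0:ℝ)))
    (hvsspos : ∀ t ∈ Set.Ioo (0:ℝ) 1, ∀ s ∈ Set.Ioi (0:ℝ), 0 < vss t s)
    (hvpde : ∀ t ∈ Set.Ioo (0:ℝ) 1, ∀ s ∈ Set.Ioi (0:ℝ),
      vt t s = 1 / (2 * (s ^ 2 * vss t s)))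
    (J : Set ℝ) (hJ : IsOpen J)
    (g gt gy gyy : ℝ → ℝ → ℝ)
    (hgt : ∀ t ∈ Set.Ioo (0:ℝ) 1, ∀ y ∈ J, HasDerivAt (fun τ => g τ y) (gt t y) t)
    (hgy : ∀ t ∈ Set.Ioo (0:ℝ) 1, ∀ y ∈ J, HasDerivAt (fun y' => g t y') (gy t y) y)
    (hgyy : ∀ t ∈ Set.Ioo (0:ℝ) 1, ∀ y ∈ J, HasDerivAt (fun y' => gy t y') (gyy t y) y)
    (hgtc : ContinuousOn (fun p : ℝ × ℝ => gt p.1 p.2) (Set.Ioo (0:ℝ) 1 ×ˢ J))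
    (hgyc : ContinuousOn (fun p : ℝ × ℝ => gy p.1 p.2) (Set.Ioo (0:ℝ) 1 ×ˢ J))
    (hgyyc : ContinuousOn (fun p : ℝ × ℝ => gyy p.1 p.2) (Set.Ioo (0:ℝ) 1 ×ˢ J))
    (hrange : ∀ t ∈ Set.Ioo (0:ℝ) 1, ∀ s ∈ Set.Ioi (0:ℝ), vs t s ∈ J)
    (hleg : ∀ t ∈ Set.Ioo (0:ℝ) 1, ∀ s ∈ Set.Ioi (0:ℝ),
      g t (vs t s) = s * vs t s - v t s)
    (hleg' : ∀ t ∈ Set.Ioo (0:ℝ) 1, ∀ s ∈ Set.Ioi (0:ℝ), gy t (vs t s) = s) :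
    ∀ t ∈ Set.Ioo (0:ℝ) 1, ∀ s ∈ Set.Ioi (0:ℝ),
      gt t (vs t s) + gyy t (vs t s) / (2 * (gy t (vs t s)) ^ 2) = 0 := by

  intro t ht s₀ hs₀
  set y₀ := vs t s₀ with hy₀
  have hy₀J : y₀ ∈ J := hrange t ht s₀ hs₀
  -- strict monotonicity of vs in s
  have hvsmono : ∀ τ ∈ Set.Ioo (0:ℝ) 1, StrictMonoOn (fun s => vs τ s) (Set.Ioi (0:ℝ)) := by
    intro τ hτ
    apply strictMonoOn_of_deriv_pos (convex_Ioi 0)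
    · exact fun x hx => (hvss τ hτ x hx).continuousAt.continuousWithinAt
    · intro x hx
      rw [interior_Ioi] at hx
      rw [(hvss τ hτ x hx).deriv]
      exact hvsspos τ hτ x hx
  -- Legendre maximality
  have hmax : ∀ τ ∈ Set.Ioo (0:ℝ) 1, ∀ q ∈ Set.Ioi (0:ℝ), ∀ p ∈ Set.Ioi (0:ℝ),
      p * vs τ q - v τ p ≤ q * vs τ q - v τ q := by
    intro τ hτ q hq p hp
    have hψd : ∀ x ∈ Set.Ioi (0:ℝ),
        HasDerivAt (fun s => s * vs τ q - v τ s) (vs τ q - vs τ x) x := by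
      intro x hx
      have h := ((hasDerivAt_id' x).mul_const (vs τ q)).sub (hvs τ hτ x hx); rwa [one_mul] at h
    rcases le_total p q with hle | hle
    · have hm : MonotoneOn (fun s => s * vs τ q - v τ s) (Set.Ioc 0 q) := by
        apply monotoneOn_of_deriv_nonneg (convex_Ioc 0 q)
        · exact fun x hx => (hψd x hx.1).continuousAt.continuousWithinAt
        · intro x hx
          rw [interior_Ioc] at hx
          exact (hψd x hx.1).differentiableAt.differentiableWithinAt
        · intro x hx
          rw [interior_Ioc] at hx
          rw [(hψd x hx.1).deriv]
          have := hvsmono τ hτ hx.1 hq hx.2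
          linarith
      exact hm ⟨hp, hle⟩ ⟨hq, le_refl q⟩ hle
    · have hm : AntitoneOn (fun s => s * vs τ q - v τ s) (Set.Ici q) := by
        apply antitoneOn_of_deriv_nonpos (convex_Ici q)
        · intro x hx
          exact (hψd x (show (0:ℝ) < x from lt_of_lt_of_le hq hx)).continuousAt.continuousWithinAt
        · intro x hx
          rw [interior_Ici] at hx
          exact (hψd x (show (0:ℝ) < x from lt_trans hq hx)).differentiableAt.differentiableWithinAt
        · intro x hx
          rw [interior_Ici] at hx
          rw [(hψd x (show (0:ℝ) < x from lt_trans hq hx)).deriv]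
          have := hvsmono τ hτ hq (show (0:ℝ) < x from lt_trans hq hx) hx
          linarith
      exact hm (le_refl q) hle hle
  -- gyy relation via chain rule
  have hchain : HasDerivAt (fun s => gy t (vs t s)) (gyy t y₀ * vss t s₀) s₀ :=
    (hgyy t ht y₀ hy₀J).comp s₀ (hvss t ht s₀ hs₀)
  have hid1 : HasDerivAt (fun s => gy t (vs t s)) 1 s₀ := by
    have heq : (fun s => gy t (vs t s)) =ᶠ[nhds s₀] fun s => s := by
      filter_upwards [Ioi_mem_nhds hs₀] with x hx using hleg' t ht x hx
    exact (hasDerivAt_id' (x := s₀)).congr_of_eventuallyEq heq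
  have hgyyval : gyy t y₀ * vss t s₀ = 1 := hchain.unique hid1
  -- gt relation via local minimum
  set a := s₀ / 2 with ha_def
  set b := 3 * s₀ / 2 with hb_def
  have hs0 : (0:ℝ) < s₀ := hs₀
  have ha : a ∈ Set.Ioi (0:ℝ) := by simp only [ha_def, Set.mem_Ioi]; linarith
  have hb : b ∈ Set.Ioi (0:ℝ) := by simp only [hb_def, Set.mem_Ioi]; linarith
  have hay : vs t a < y₀ := hvsmono t ht ha hs₀ (by simp only [ha_def]; linarith)
  have hby : y₀ < vs t b := hvsmono t ht hs₀ hb (by simp only [hb_def]; linarith)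
  have hca : ContinuousAt (fun τ => vs τ a) t := by
    have h1 : ContinuousAt (fun p : ℝ × ℝ => vs p.1 p.2) (t, a) :=
      hvsc.continuousAt ((isOpen_Ioo.prod isOpen_Ioi).mem_nhds ⟨ht, ha⟩)
    have h2 : Continuous fun τ : ℝ => ((τ, a) : ℝ × ℝ) := continuous_id.prodMk continuous_const
    have h3 : ContinuousAt ((fun p : ℝ × ℝ => vs p.1 p.2) ∘ (fun τ : ℝ => (τ, a))) t :=
      ContinuousAt.comp (x := t) (f := fun τ : ℝ => (τ, a)) h1 h2.continuousAt
    exact h3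
  have hcb : ContinuousAt (fun τ => vs τ b) t := by
    have h1 : ContinuousAt (fun p : ℝ × ℝ => vs p.1 p.2) (t, b) :=
      hvsc.continuousAt ((isOpen_Ioo.prod isOpen_Ioi).mem_nhds ⟨ht, hb⟩)
    have h2 : Continuous fun τ : ℝ => ((τ, b) : ℝ × ℝ) := continuous_id.prodMk continuous_const
    have h3 : ContinuousAt ((fun p : ℝ × ℝ => vs p.1 p.2) ∘ (fun τ : ℝ => (τ, b))) t :=
      ContinuousAt.comp (x := t) (f := fun τ : ℝ => (τ, b)) h1 h2.continuousAt
    exact h3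
  have heva : ∀ᶠ τ in nhds t, vs τ a < y₀ := hca.eventually_lt_const hay
  have hevb : ∀ᶠ τ in nhds t, y₀ < vs τ b := hcb.eventually_const_lt hby
  have hevt : ∀ᶠ τ in nhds t, τ ∈ Set.Ioo (0:ℝ) 1 := isOpen_Ioo.mem_nhds ht
  have hmin : IsLocalMin (fun τ => g τ y₀ - s₀ * y₀ + v τ s₀) t := by
    have h0 : g t y₀ - s₀ * y₀ + v t s₀ = 0 := by
      have := hleg t ht s₀ hs₀; rw [← hy₀] at this; linarith
    rw [IsLocalMin, IsMinFilter]
    filter_upwards [heva, hevb, hevt] with τ h1 h2 hτ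
    rw [h0]
    have hab : a ≤ b := by simp only [ha_def, hb_def]; linarith
    have hcont : ContinuousOn (fun s => vs τ s) (Set.Icc a b) := fun x hx =>
      (hvss τ hτ x (lt_of_lt_of_le ha hx.1)).continuousAt.continuousWithinAt
    have hy₀mem : y₀ ∈ Set.Icc (vs τ a) (vs τ b) := ⟨le_of_lt h1, le_of_lt h2⟩
    obtain ⟨q, hqmem, hqeq'⟩ := intermediate_value_Icc hab hcont hy₀mem
    have hqeq : vs τ q = y₀ := hqeq'
    have hq : q ∈ Set.Ioi (0:ℝ) := lt_of_lt_of_le ha hqmem.1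
    have hg : g τ y₀ = q * y₀ - v τ q := by
      rw [← hqeq]; exact hleg τ hτ q hq
    have := hmax τ hτ q hq s₀ hs₀
    rw [hqeq] at this
    linarith
  have hd : HasDerivAt (fun τ => g τ y₀ - s₀ * y₀ + v τ s₀) (gt t y₀ + vt t s₀) t := by
    exact ((hgt t ht y₀ hy₀J).sub_const (s₀ * y₀)).add (hvt t ht s₀ hs₀)
  have hzero : gt t y₀ + vt t s₀ = 0 := hmin.hasDerivAt_eq_zero hd
  -- conclude
  have hgval : gy t y₀ = s₀ := hleg' t ht s₀ hs₀
  have hvtval := hvpde t ht s₀ hs₀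
  have hvsspos' := hvsspos t ht s₀ hs₀
  rw [hgval]
  have hvssne : vss t s₀ ≠ 0 := ne_of_gt hvsspos'
  have hs0ne : s₀ ≠ 0 := ne_of_gt hs0
  have h1 : gt t y₀ = -(1 / (2 * (s₀ ^ 2 * vss t s₀))) := by rw [← hvtval]; linarith
  rw [h1]
  field_simp
  linear_combination hgyyval
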